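/- arXiv:2403.08727 — 3 statements merged into one kernel-verified Lean document; each statement's English description precedes it below -/
import Mathlib

section
/- Let Λ be a lattice in ℝ^m with fundamental domain T of finite positive volume, and let U be a nonempty bounded Lebesgue measurable subset of ℝ^m. Then there exists τ ∈ T such that the number of lattice points in the translate τ + U satisfies |(τ + U) ∩ Λ| ≥ vol(U)/vol(T). -/
open MeasureTheory Set

open Pointwise

/-- Lenstra–Siegel averaging lemma: for a lattice `L` in `ℝ^m` with fundamental
domain `T` of finite positive volume and a nonempty bounded measurable set `U`,
some translate `τ + U` with `τ ∈ T` contains at least `vol U / vol T` lattice points. -/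
theorem lenstra_siegel (m : ℕ) (L : AddSubgroup (Fin m → ℝ))
    (hLdisc : DiscreteTopology L)
    (T : Set (Fin m → ℝ)) (hT : IsAddFundamentalDomain L T volume)
    (hTpos : 0 < volume T) (hTfin : volume T ≠ ⊤)
    (U : Set (Fin m → ℝ)) (hUne : U.Nonempty) (hUbdd : Bornology.IsBounded U)
    (hUmeas : MeasurableSet U) :
    ∃ τ ∈ T, volume U / volume T ≤ ((((τ + ·) '' U) ∩ (L : Set (Fin m → ℝ))).ncard : ENNReal) := by
  have hTne : T.Nonempty := nonempty_of_measure_ne_zero hTpos.ne'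
  -- trivial case: vol U = 0
  by_cases hU0 : volume U = 0
  · obtain ⟨τ, hτ⟩ := hTne
    exact ⟨τ, hτ, by simp [hU0, ENNReal.zero_div]⟩
  set q : ENNReal := volume U / volume T with hq
  have hUfin : volume U ≠ ⊤ := hUbdd.measure_lt_top.ne
  have hq0 : q ≠ 0 := by
    simp [hq, ENNReal.div_eq_zero_iff, hU0, hTfin]
  have hqtop : q ≠ ⊤ := by
    simp [hq, ENNReal.div_eq_top, hUfin, hTpos.ne']
  -- translate sets
  set S : L → Set (Fin m → ℝ) := fun g => (g : Fin m → ℝ) +ᵥ (-U) with hS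
  have hSmem : ∀ (g : L) (τ : Fin m → ℝ),
      τ ∈ S g ↔ (g : Fin m → ℝ) ∈ (τ + ·) '' U := by
    intro g τ
    simp only [hS, Set.mem_vadd_set, Set.mem_image, Set.mem_neg]
    constructor
    · rintro ⟨x, hx, rfl⟩
      exact ⟨-x, hx, by simp [vadd_eq_add]; try abel⟩
    · rintro ⟨u, hu, hu'⟩
      exact ⟨-u, by simpa using hu, by rw [← hu']; simp [vadd_eq_add]; try abel⟩
  have hSmeas : ∀ g : L, MeasurableSet (S g) := fun g =>
    (hUmeas.neg).const_vadd _
  -- finiteness of the lattice-point sets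
  have hfin : ∀ τ : Fin m → ℝ, (((τ + ·) '' U) ∩ (L : Set (Fin m → ℝ))).Finite := by
    intro τ
    have hb : Bornology.IsBounded ((τ + ·) '' U) := by
      simpa [← Set.image_vadd, vadd_eq_add] using hUbdd.vadd τ
    exact Metric.finite_isBounded_inter_isClosed DiscreteTopology.isDiscrete hb AddSubgroup.isClosed_of_discrete
  -- counting function as a tsum
  have hcount : ∀ τ : Fin m → ℝ,
      (((((τ + ·) '' U) ∩ (L : Set (Fin m → ℝ))).ncard : ℕ) : ENNReal)
        = ∑' g : L, (S g).indicator (fun _ => (1 : ENNReal)) τ := by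
    intro τ
    set A := ((τ + ·) '' U) ∩ (L : Set (Fin m → ℝ)) with hA
    set B : Set L := {g : L | τ ∈ S g} with hB
    have h1 : ∀ g : L, (S g).indicator (fun _ => (1 : ENNReal)) τ
        = B.indicator (fun _ => (1 : ENNReal)) g := by
      intro g
      by_cases h : τ ∈ S g <;> simp [h, hB, Set.indicator_apply]
    rw [tsum_congr h1, ← tsum_subtype B (fun _ => (1 : ENNReal)),
      ENNReal.tsum_set_one]
    have hAB : A = (↑) '' B := by
      ext x
      simp only [hA, hB, Set.mem_inter_iff, Set.mem_image, Set.mem_setOf_eq]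
      constructor
      · rintro ⟨hx1, hx2⟩
        exact ⟨⟨x, hx2⟩, (hSmem ⟨x, hx2⟩ τ).2 hx1, rfl⟩
      · rintro ⟨g, hg, rfl⟩
        exact ⟨(hSmem g τ).1 hg, g.2⟩
    have : B.encard = A.encard := by
      rw [hAB, Set.InjOn.encard_image (Subtype.val_injective.injOn)]
    rw [this, ← (hfin τ).cast_ncard_eq]
    norm_cast
  -- by contradiction
  by_contra hcon
  push_neg at hcon
  -- uniform bound N
  set N : ℕ := ⌈q.toReal⌉₊ - 1 with hN
  have hqR : 0 < q.toReal := ENNReal.toReal_pos hq0 hqtop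
  have hceil : 1 ≤ ⌈q.toReal⌉₊ := Nat.one_le_ceil_iff.2 hqR
  have hNq : (N : ENNReal) < q := by
    rw [← ENNReal.ofReal_toReal hqtop, ← ENNReal.ofReal_natCast]
    refine ENNReal.ofReal_lt_ofReal_iff hqR |>.2 ?_
    by_contra h
    push_neg at h
    have := Nat.ceil_le.2 h
    omega
  have hbound : ∀ τ ∈ T, ((((τ + ·) '' U) ∩ (L : Set (Fin m → ℝ))).ncard : ENNReal) ≤ N := by
    intro τ hτ
    have := hcon τ hτ
    have hk : ((((τ + ·) '' U) ∩ (L : Set (Fin m → ℝ))).ncard : ℝ) < q.toReal := by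
      have := ENNReal.toReal_strict_mono hqtop this
      simpa using this
    have : (((τ + ·) '' U) ∩ (L : Set (Fin m → ℝ))).ncard < ⌈q.toReal⌉₊ :=
      Nat.lt_ceil.2 hk
    have h2 : (((τ + ·) '' U) ∩ (L : Set (Fin m → ℝ))).ncard ≤ N := by omega
    exact_mod_cast Nat.cast_le.2 h2
  haveI : Countable ↥L := TopologicalSpace.separableSpace_iff_countable.mp inferInstance
  -- the integral identity
  have hint : ∫⁻ τ in T, ((((τ + ·) '' U) ∩ (L : Set (Fin m → ℝ))).ncard : ENNReal) ∂volume
      = volume U := by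
    calc ∫⁻ τ in T, ((((τ + ·) '' U) ∩ (L : Set (Fin m → ℝ))).ncard : ENNReal) ∂volume
        = ∫⁻ τ in T, ∑' g : L, (S g).indicator (fun _ => (1 : ENNReal)) τ ∂volume := by
          exact lintegral_congr fun τ => hcount τ
      _ = ∑' g : L, ∫⁻ τ in T, (S g).indicator (fun _ => (1 : ENNReal)) τ ∂volume :=
          lintegral_tsum fun g => ((measurable_const.indicator (hSmeas g)).aemeasurable)
      _ = ∑' g : L, volume (S g ∩ T) := by
          refine tsum_congr fun g => ?_
          rw [lintegral_indicator (hSmeas g), setLIntegral_one,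
            Measure.restrict_apply (hSmeas g)]
      _ = volume (-U) := (hT.measure_eq_tsum (-U)).symm
      _ = volume U := by rw [Measure.measure_neg]
  -- contradiction
  have hle : volume U ≤ (N : ENNReal) * volume T := by
    rw [← hint, ← setLIntegral_const T (N : ENNReal)]
    refine lintegral_mono_ae ?_
    filter_upwards [ae_restrict_mem₀ hT.nullMeasurableSet] with τ hτ using hbound τ hτ
  have hlt : (N : ENNReal) * volume T < q * volume T :=
    (ENNReal.mul_lt_mul_iff_left hTpos.ne' hTfin).2 hNq
  have : volume U < volume U := by
    calc volume U ≤ (N : ENNReal) * volume T := hle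
      _ < q * volume T := hlt
      _ = volume U := by rw [hq, ENNReal.div_mul_cancel hTpos.ne' hTfin]
  exact absurd this (lt_irrefl _)
end

section
/- For every number field K of degree m ≥ 1, the absolute value of the discriminant satisfies √|Δ_K| ≥ (m^m / m!) · (π/4)^{m/2}. -/
open NumberField Module

/-- Minkowski's discriminant bound: `√|Δ_K| ≥ (m^m / m!) · (π/4)^{m/2}` for `m = [K:ℚ]`. -/
theorem minkowski_discr_bound (K : Type) [Field K] [NumberField K]
    (m : ℕ) (hm : m = finrank ℚ K) (hm1 : 1 ≤ m) :
    ((m : ℝ) ^ m / (Nat.factorial m : ℝ)) * (Real.pi / 4) ^ ((m : ℝ) / 2) ≤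
      Real.sqrt |(NumberField.discr K : ℝ)| := by
  subst hm
  set m := finrank ℚ K with hm
  set r₂ := InfinitePlace.nrComplexPlaces K with hr₂
  have hπ : (0 : ℝ) < Real.pi := Real.pi_pos
  obtain ⟨x, h_nz, h_bd⟩ := exists_ne_zero_mem_ringOfIntegers_of_norm_le_mul_sqrt_discr K
  have h_nm : (1 : ℝ) ≤ |Algebra.norm ℚ (x : K)| := by
    rw [← Algebra.coe_norm_int, ← Int.cast_one, ← Int.cast_abs, Rat.cast_intCast, Int.cast_le]
    exact Int.one_le_abs (Algebra.norm_ne_zero_iff.mpr h_nz)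
  replace h_bd := le_trans h_nm h_bd
  have hm0 : (0 : ℝ) < (m : ℝ) := by exact_mod_cast hm1
  have key : ((m : ℝ) ^ m / (Nat.factorial m : ℝ)) * (Real.pi / 4) ^ r₂ ≤
      Real.sqrt |(NumberField.discr K : ℝ)| := by
    have h1 : (0 : ℝ) < (4 / Real.pi) ^ r₂ * (Nat.factorial m : ℝ) / (m : ℝ) ^ m := by
      positivity
    rw [← div_le_iff₀' h1] at h_bd
    refine le_trans (le_of_eq ?_) h_bd
    field_simp
    ring_nf
    rw [← mul_pow, ← mul_pow, ← mul_pow, mul_inv_cancel₀ hπ.ne']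
    norm_num
  refine le_trans ?_ key
  have hr2 : (r₂ : ℝ) ≤ (m : ℝ) / 2 := by
    have := InfinitePlace.card_add_two_mul_card_eq_rank K
    have : 2 * r₂ ≤ m := by omega
    have : (2 * r₂ : ℝ) ≤ (m : ℝ) := by exact_mod_cast this
    linarith
  have hp1 : Real.pi / 4 ≤ 1 := by linarith [Real.pi_le_four]
  have hp0 : (0 : ℝ) < Real.pi / 4 := by positivity
  refine mul_le_mul_of_nonneg_left ?_ (by positivity)
  calc (Real.pi / 4) ^ ((m : ℝ) / 2) ≤ (Real.pi / 4) ^ ((r₂ : ℝ)) :=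
        Real.rpow_le_rpow_of_exponent_ge hp0 hp1 hr2
    _ = (Real.pi / 4) ^ r₂ := Real.rpow_natCast _ _
end

section
/- Let p_ℓ denote the ℓ-th prime. For all ℓ ≥ 125, Chebyshev's function satisfies ϑ(p_ℓ) < (3 + log 2)ℓ + ℓ·log ℓ + ℓ·log log ℓ, where ϑ(x) = Σ_{p ≤ x} log p. -/
/-- Chebyshev's function `ϑ(n) = ∑_{p ≤ n} log p`. -/
noncomputable def chebyshevTheta (n : ℕ) : ℝ :=
  ∑ p ∈ Finset.filter Nat.Prime (Finset.range (n + 1)), Real.log p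

open Finset Real

/-- The central binomial coefficient is at most `(2m)^π(2m)`. -/
lemma aux_centralBinom_le_pow (m : ℕ) (hm : 0 < m) :
    Nat.centralBinom m ≤ (2 * m) ^ (Nat.count Nat.Prime (2 * m + 1)) := by
  set N := Nat.centralBinom m with hNdef
  have hN : N ≠ 0 := (Nat.centralBinom_pos m).ne'
  have h2m : 0 < 2 * m := by omega
  have hsub : N.primeFactors ⊆ Finset.filter Nat.Prime (Finset.range (2 * m + 1)) := by
    intro p hp
    have hpp : p.Prime := Nat.prime_of_mem_primeFactors hp
    have hps : N.factorization p ≠ 0 := by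
      rwa [← Finsupp.mem_support_iff, Nat.support_factorization]
    have hple : p ≤ 2 * m := by
      calc p ≤ p ^ N.factorization p := Nat.le_self_pow hps p
        _ ≤ 2 * m := Nat.pow_factorization_choose_le h2m
    simp [Finset.mem_filter, Finset.mem_range, hpp, Nat.lt_succ_of_le hple]
  calc N = ∏ p ∈ N.primeFactors, p ^ N.factorization p := by
        conv_lhs => rw [← Nat.factorization_prod_pow_eq_self hN]
        rw [Finsupp.prod, Nat.support_factorization]
    _ ≤ ∏ _p ∈ N.primeFactors, 2 * m := by
        apply Finset.prod_le_prod'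
        intro p hp
        exact Nat.pow_factorization_choose_le h2m
    _ = (2 * m) ^ N.primeFactors.card := Finset.prod_const _
    _ ≤ (2 * m) ^ (Nat.count Nat.Prime (2 * m + 1)) := by
        apply Nat.pow_le_pow_right h2m
        rw [Nat.count_eq_card_filter_range]
        exact Finset.card_le_card hsub

/-- Lower bound for the prime counting function. -/
lemma aux_count_ge (ℓ m : ℕ) (hm : 4 ≤ m)
    (h : (ℓ : ℝ) * Real.log (2 * m) ≤ m * Real.log 4) :
    ℓ ≤ Nat.count Nat.Prime (2 * m + 1) := by
  set c := Nat.count Nat.Prime (2 * m + 1)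
  have hm0 : (0 : ℝ) < m := by positivity
  have h2m1 : (1 : ℝ) < 2 * m := by
    have : (4 : ℝ) ≤ m := by exact_mod_cast hm
    linarith
  have hnat : 4 ^ m < m * (2 * m) ^ c :=
    lt_of_lt_of_le (Nat.four_pow_lt_mul_centralBinom m hm)
      (Nat.mul_le_mul_left m (aux_centralBinom_le_pow m (by omega)))
  have hreal : (4 : ℝ) ^ m < (m : ℝ) * (2 * m) ^ c := by exact_mod_cast hnat
  have hlog : (m : ℝ) * Real.log 4 < Real.log m + c * Real.log (2 * m) := by
    have h1 : Real.log ((4 : ℝ) ^ m) < Real.log ((m : ℝ) * (2 * m) ^ c) :=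
      Real.log_lt_log (by positivity) hreal
    rwa [Real.log_pow, Real.log_mul (by positivity) (by positivity), Real.log_pow] at h1
  have hlogm : Real.log m ≤ Real.log (2 * m) :=
    Real.log_le_log (by positivity) (by linarith)
  have hlog2m : (0 : ℝ) < Real.log (2 * m) := Real.log_pos h2m1
  -- ℓ * log(2m) < (c+1) * log(2m)
  have : (ℓ : ℝ) < c + 1 := by
    have h2 : (ℓ : ℝ) * Real.log (2 * m) < (c + 1) * Real.log (2 * m) := by
      calc (ℓ : ℝ) * Real.log (2 * m) ≤ m * Real.log 4 := h
        _ < Real.log m + c * Real.log (2 * m) := hlog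
        _ ≤ (c + 1) * Real.log (2 * m) := by nlinarith
    exact lt_of_mul_lt_mul_right h2 hlog2m.le
  exact_mod_cast Nat.lt_succ_iff.mp (by exact_mod_cast this)

/-- For `ℓ ≥ 125` and `p_ℓ` the `ℓ`-th prime (so `p_1 = 2`),
`ϑ(p_ℓ) < (3 + log 2)ℓ + ℓ log ℓ + ℓ log log ℓ`. -/
theorem chebyshevTheta_nth_prime_lt (ℓ : ℕ) (hℓ : 125 ≤ ℓ) :
    chebyshevTheta (Nat.nth Nat.Prime (ℓ - 1)) <
      (3 + Real.log 2) * (ℓ : ℝ) + (ℓ : ℝ) * Real.log ℓ +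
        (ℓ : ℝ) * Real.log (Real.log ℓ) := by
  have hℓR : (125 : ℝ) ≤ (ℓ : ℝ) := by exact_mod_cast hℓ
  have hℓ0 : (0 : ℝ) < ℓ := by linarith
  set L := Real.log ℓ with hLdef
  have hL1 : 1 ≤ L := by
    rw [hLdef, Real.le_log_iff_exp_le hℓ0]
    have := Real.exp_one_lt_d9
    linarith
  have hL0 : 0 < L := by linarith
  have hLleℓ : L ≤ (ℓ : ℝ) := by
    have := Real.log_le_sub_one_of_pos hℓ0
    linarith
  set m : ℕ := ⌈7 * (ℓ : ℝ) * L⌉₊ with hmdef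
  have hm_lb : 7 * (ℓ : ℝ) * L ≤ m := Nat.le_ceil _
  have hm_ub : (m : ℝ) ≤ 7 * (ℓ : ℝ) * L + 1 := by
    have := Nat.ceil_lt_add_one (show (0:ℝ) ≤ 7 * (ℓ : ℝ) * L by positivity)
    linarith
  have hℓL1 : 1 ≤ (ℓ : ℝ) * L := by nlinarith
  have hm4 : 4 ≤ m := by
    have : (4 : ℝ) ≤ (m : ℝ) := by nlinarith
    exact_mod_cast this
  have hm0R : (0 : ℝ) < m := by
    have : (0:ℕ) < m := by omega
    exact_mod_cast this
  -- 2m ≤ 16 ℓ L ≤ ℓ^3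
  have h2m_ub : (2 * m : ℝ) ≤ 16 * (ℓ : ℝ) * L := by nlinarith
  have h2m_cube : (2 * m : ℝ) ≤ (ℓ : ℝ) ^ 3 := by
    have h1 : 16 * (ℓ:ℝ) * L ≤ 16 * (ℓ:ℝ) * (ℓ:ℝ) := by nlinarith
    have h2 : 16 * (ℓ:ℝ) * (ℓ:ℝ) ≤ (ℓ:ℝ) ^ 3 := by nlinarith
    linarith
  -- key inequality: ℓ log(2m) ≤ m log 4
  have hlog4 : (1 : ℝ) ≤ Real.log 4 := by
    rw [Real.le_log_iff_exp_le (by norm_num)]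
    have := Real.exp_one_lt_d9
    linarith
  have hkey : (ℓ : ℝ) * Real.log (2 * m) ≤ (m : ℝ) * Real.log 4 := by
    have h1 : Real.log (2 * (m:ℝ)) ≤ 3 * L := by
      calc Real.log (2 * (m:ℝ)) ≤ Real.log ((ℓ:ℝ) ^ 3) :=
            Real.log_le_log (by positivity) (by linarith)
        _ = 3 * L := by rw [Real.log_pow]; norm_num; exact hLdef.symm
    calc (ℓ : ℝ) * Real.log (2 * m) ≤ (ℓ : ℝ) * (3 * L) := by
          exact mul_le_mul_of_nonneg_left h1 hℓ0.le
      _ ≤ (7 * (ℓ : ℝ) * L) * Real.log 4 := by nlinarith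
      _ ≤ (m : ℝ) * Real.log 4 := by nlinarith
  have hcount : ℓ ≤ Nat.count Nat.Prime (2 * m + 1) := by
    exact aux_count_ge ℓ m hm4 hkey
  -- p := nth prime, p ≤ 2m
  set p := Nat.nth Nat.Prime (ℓ - 1) with hpdef
  have hple : p ≤ 2 * m := by
    have : p < 2 * m + 1 := Nat.nth_lt_of_lt_count (by omega)
    omega
  -- the sum has exactly ℓ terms
  have hcard : (Finset.filter Nat.Prime (Finset.range (p + 1))).card = ℓ := by
    rw [← Nat.count_eq_card_filter_range, Nat.count_succ,
      Nat.count_nth_of_infinite Nat.infinite_setOf_prime,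
      if_pos (Nat.prime_nth_prime (ℓ - 1))]
    omega
  -- bound 2m < 2 e^3 ℓ L
  have he3 : (8 : ℝ) < Real.exp 3 := by
    have h1 : (2 : ℝ) < Real.exp 1 := by
      have := Real.exp_one_gt_d9; linarith
    calc (8 : ℝ) = 2 * 2 * 2 := by norm_num
      _ < Real.exp 1 * Real.exp 1 * Real.exp 1 := by
          have h0 : (0:ℝ) < Real.exp 1 := Real.exp_pos 1
          nlinarith
      _ = Real.exp 3 := by rw [← Real.exp_add, ← Real.exp_add]; norm_num
  have h2m_lt : (2 * m : ℝ) < 2 * Real.exp 3 * (ℓ : ℝ) * L := by nlinarith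
  -- each term of the sum is < log(2 e^3 ℓ L)
  set B := Real.log (2 * Real.exp 3 * (ℓ : ℝ) * L) with hBdef
  have hterm : ∀ q ∈ Finset.filter Nat.Prime (Finset.range (p + 1)),
      Real.log q ≤ Real.log (2 * (m : ℝ)) := by
    intro q hq
    rw [Finset.mem_filter, Finset.mem_range] at hq
    have hq2 : 2 ≤ q := hq.2.two_le
    have hqle : (q : ℝ) ≤ 2 * (m : ℝ) := by
      have : q ≤ 2 * m := le_trans (Nat.lt_succ_iff.mp hq.1) hple
      exact_mod_cast this
    exact Real.log_le_log (by exact_mod_cast Nat.lt_of_lt_of_le Nat.zero_lt_two hq2) hqle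
  have hsum : chebyshevTheta p ≤ (ℓ : ℝ) * Real.log (2 * (m : ℝ)) := by
    rw [chebyshevTheta]
    calc ∑ q ∈ Finset.filter Nat.Prime (Finset.range (p + 1)), Real.log q
        ≤ (Finset.filter Nat.Prime (Finset.range (p + 1))).card • Real.log (2 * (m : ℝ)) :=
          Finset.sum_le_card_nsmul _ _ _ hterm
      _ = (ℓ : ℝ) * Real.log (2 * (m : ℝ)) := by rw [hcard, nsmul_eq_mul]
  have hlog_lt : Real.log (2 * (m : ℝ)) < B :=
    Real.log_lt_log (by positivity) (by linarith)
  have hBval : B = Real.log 2 + 3 + L + Real.log L := by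
    rw [hBdef, Real.log_mul (by positivity) (by positivity),
      Real.log_mul (by positivity) (by positivity),
      Real.log_mul (by norm_num) (Real.exp_ne_zero 3), Real.log_exp]
  calc chebyshevTheta p ≤ (ℓ : ℝ) * Real.log (2 * (m : ℝ)) := hsum
    _ < (ℓ : ℝ) * B := by nlinarith
    _ = (3 + Real.log 2) * (ℓ : ℝ) + (ℓ : ℝ) * L + (ℓ : ℝ) * Real.log L := by
        rw [hBval]; ring
end
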